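/- Let n ≥ 1, d ≥ 1, 0 < λ ≤ 1 and K ≥ 0. Let u : B₁ → ℝ^d be a C¹ map on the open unit ball B₁ ⊂ ℝ^n, and suppose that for every x ∈ B_{3/4} and every 0 < r < 1/4 one has ∫_{B_r(x)} ‖Du(y)‖^n dy ≤ K^n r^{nλ}. Then there exists a constant C > 0, depending only on n, d and λ, such that for all x, y ∈ B_{1/2} one has ‖u(x) − u(y)‖ ≤ C K ‖x−y‖^λ; in particular u is λ-Hölder continuous on B_{1/2}. -/

import Mathlib

set_option maxHeartbeats 1600000

open MeasureTheory Metric Set Pointwise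

lemma my_jensen {α : Type*} [MeasurableSpace α] (μ : Measure α) [IsFiniteMeasure μ] [NeZero μ]
    {nn : ℕ} (hnn : 1 ≤ nn) {h : α → ℝ} (hpos : ∀ x, 0 ≤ h x)
    (hint : Integrable h μ) (hint2 : Integrable (fun x => h x ^ nn) μ) :
    ∫ x, h x ∂μ ≤ (μ Set.univ).toReal ^ (1 - 1/(nn:ℝ)) * (∫ x, h x ^ nn ∂μ) ^ ((1:ℝ)/nn) := by
  have hM0 : 0 < (μ Set.univ).toReal :=
    ENNReal.toReal_pos (Measure.measure_univ_ne_zero.2 (NeZero.ne μ)) (measure_ne_top μ _)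
  set M := (μ Set.univ).toReal with hM
  have hnn0 : (nn:ℝ) ≠ 0 := by positivity
  have ha0 : 0 ≤ ⨍ x, h x ∂μ := by
    rw [average_eq]
    exact smul_nonneg (by positivity) (integral_nonneg hpos)
  have hb0 : 0 ≤ ⨍ x, h x ^ nn ∂μ := by
    rw [average_eq]
    exact smul_nonneg (by positivity) (integral_nonneg (fun x => pow_nonneg (hpos x) _))
  have jensen : (⨍ x, h x ∂μ) ^ nn ≤ ⨍ x, h x ^ nn ∂μ := by
    exact (convexOn_pow nn).map_average_le (continuousOn_pow nn) isClosed_Ici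
      (Filter.Eventually.of_forall (fun x => hpos x)) hint hint2
  have key : ⨍ x, h x ∂μ ≤ (⨍ x, h x ^ nn ∂μ) ^ ((1:ℝ)/nn) := by
    have := Real.rpow_le_rpow (by positivity) jensen (by positivity : (0:ℝ) ≤ 1/(nn:ℝ))
    calc ⨍ x, h x ∂μ = ((⨍ x, h x ∂μ) ^ nn) ^ ((1:ℝ)/nn) := by
          rw [← Real.rpow_natCast (⨍ x, h x ∂μ) nn, ← Real.rpow_mul ha0]
          rw [mul_one_div, div_self hnn0, Real.rpow_one]
      _ ≤ _ := this
  have hIH : ∫ x, h x ∂μ = M * ⨍ x, h x ∂μ := by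
    rw [average_eq, smul_eq_mul, measureReal_def, ← hM, ← mul_assoc, mul_inv_cancel₀ hM0.ne', one_mul]
  have hIH2 : ⨍ x, h x ^ nn ∂μ = M⁻¹ * ∫ x, h x ^ nn ∂μ := by
    rw [average_eq, smul_eq_mul, measureReal_def, ← hM]
  rw [hIH]
  calc M * ⨍ x, h x ∂μ ≤ M * (⨍ x, h x ^ nn ∂μ) ^ ((1:ℝ)/nn) := by
        exact mul_le_mul_of_nonneg_left key hM0.le
    _ = M ^ (1 - 1/(nn:ℝ)) * (∫ x, h x ^ nn ∂μ) ^ ((1:ℝ)/nn) := by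
        rw [hIH2, Real.mul_rpow (by positivity) (integral_nonneg (fun x => pow_nonneg (hpos x) _)),
          ← mul_assoc]
        congr 1
        nth_rewrite 1 [← Real.rpow_one M]
        rw [← Real.rpow_neg_one M, ← Real.rpow_mul hM0.le,
          ← Real.rpow_add hM0]
        norm_num [sub_eq_add_neg]

lemma l1_ball_bound (n d : ℕ) (hn : 1 ≤ n)
    {u : EuclideanSpace ℝ (Fin n) → EuclideanSpace ℝ (Fin d)}
    (hu : ContDiffOn ℝ 1 u (ball 0 1))
    {K lam : ℝ} (hK : 0 ≤ K) (hlam0 : 0 < lam)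
    (hM : ∀ x ∈ ball (0 : EuclideanSpace ℝ (Fin n)) (3/4), ∀ r : ℝ, 0 < r → r < 1/4 →
        (∫ y in ball x r, ‖fderiv ℝ u y‖ ^ n) ≤ K ^ n * r ^ ((n : ℝ) * lam))
    {q : EuclideanSpace ℝ (Fin n)} (hq : q ∈ ball (0 : EuclideanSpace ℝ (Fin n)) (3/4))
    {s : ℝ} (hs : 0 < s) (hs4 : s < 1/4)
    (hsub : closedBall q s ⊆ ball (0 : EuclideanSpace ℝ (Fin n)) 1) :
    ∫ w in ball q s, ‖fderiv ℝ u w‖ ≤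
      ((volume (ball (0 : EuclideanSpace ℝ (Fin n)) 1)).toReal ^ (1 - 1/(n:ℝ)))
        * s ^ ((n:ℝ) - 1) * (K * s ^ lam) := by
  haveI : Nontrivial (EuclideanSpace ℝ (Fin n)) := by
    apply Module.nontrivial_of_finrank_pos (R := ℝ)
    rw [finrank_euclideanSpace_fin]
    omega
  set V := (volume (ball (0 : EuclideanSpace ℝ (Fin n)) 1)).toReal with hV
  have hV0 : 0 < V :=
    ENNReal.toReal_pos (measure_ball_pos volume _ one_pos).ne' measure_ball_lt_top.ne
  have hn0 : (n:ℝ) ≠ 0 := by positivity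
  haveI : IsFiniteMeasure (volume.restrict (ball q s)) :=
    ⟨by rw [Measure.restrict_apply_univ]; exact measure_ball_lt_top⟩
  haveI : NeZero (volume.restrict (ball q s)) :=
    ⟨by rw [← Measure.measure_univ_ne_zero, Measure.restrict_apply_univ]
        exact (measure_ball_pos volume _ hs).ne'⟩
  have Dc : ContinuousOn (fderiv ℝ u) (ball (0 : EuclideanSpace ℝ (Fin n)) 1) :=
    hu.continuousOn_fderiv_of_isOpen isOpen_ball le_rfl
  have hC : ContinuousOn (fun w => ‖fderiv ℝ u w‖) (closedBall q s) := (Dc.mono hsub).norm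
  have hint : IntegrableOn (fun w => ‖fderiv ℝ u w‖) (ball q s) volume :=
    (hC.integrableOn_compact (isCompact_closedBall q s)).mono_set ball_subset_closedBall
  have hint2 : IntegrableOn (fun w => ‖fderiv ℝ u w‖ ^ n) (ball q s) volume :=
    ((hC.pow n).integrableOn_compact (isCompact_closedBall q s)).mono_set ball_subset_closedBall
  have jensen := my_jensen (volume.restrict (ball q s)) hn
    (fun w => norm_nonneg (fderiv ℝ u w)) hint hint2
  rw [Measure.restrict_apply_univ] at jensen
  have hvol : (volume (ball q s)).toReal = s ^ (n:ℕ) * V := by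
    rw [Measure.addHaar_ball volume q hs.le, finrank_euclideanSpace_fin,
      ENNReal.toReal_mul, ENNReal.toReal_ofReal (by positivity)]
  have hmor : (∫ w in ball q s, ‖fderiv ℝ u w‖ ^ n) ^ ((1:ℝ)/n) ≤ K * s ^ lam := by
    have h1 := hM q hq s hs hs4
    have h2 : ((0:ℝ)) ≤ ∫ w in ball q s, ‖fderiv ℝ u w‖ ^ n :=
      integral_nonneg fun w => by positivity
    calc (∫ w in ball q s, ‖fderiv ℝ u w‖ ^ n) ^ ((1:ℝ)/n)
        ≤ (K ^ n * s ^ ((n:ℝ) * lam)) ^ ((1:ℝ)/n) :=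
          Real.rpow_le_rpow h2 h1 (by positivity)
      _ = K * s ^ lam := by
          rw [Real.mul_rpow (by positivity) (by positivity), ← Real.rpow_natCast K n,
            ← Real.rpow_mul hK, ← Real.rpow_mul hs.le, mul_one_div, div_self hn0,
            Real.rpow_one, mul_one_div]
          congr 1
          field_simp
  calc ∫ w in ball q s, ‖fderiv ℝ u w‖
      ≤ (volume (ball q s)).toReal ^ (1 - 1/(n:ℝ))
          * (∫ w in ball q s, ‖fderiv ℝ u w‖ ^ n) ^ ((1:ℝ)/n) := jensen
    _ ≤ (volume (ball q s)).toReal ^ (1 - 1/(n:ℝ)) * (K * s ^ lam) := by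
        apply mul_le_mul_of_nonneg_left hmor (Real.rpow_nonneg ENNReal.toReal_nonneg _)
    _ = V ^ (1 - 1/(n:ℝ)) * s ^ ((n:ℝ) - 1) * (K * s ^ lam) := by
        congr 1
        rw [hvol, Real.mul_rpow (by positivity) hV0.le, ← Real.rpow_natCast s n,
          ← Real.rpow_mul hs.le, mul_comm (s ^ _)]
        congr 2
        field_simp

lemma key_pair (n d : ℕ) (hn : 1 ≤ n)
    {lam : ℝ} (hlam0 : 0 < lam) (hlam1 : lam ≤ 1) {K : ℝ} (hK : 0 ≤ K)
    {u : EuclideanSpace ℝ (Fin n) → EuclideanSpace ℝ (Fin d)}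
    (hu : ContDiffOn ℝ 1 u (ball 0 1))
    (hM : ∀ x ∈ ball (0 : EuclideanSpace ℝ (Fin n)) (3/4), ∀ r : ℝ, 0 < r → r < 1/4 →
        (∫ y in ball x r, ‖fderiv ℝ u y‖ ^ n) ≤ K ^ n * r ^ ((n : ℝ) * lam))
    {x y : EuclideanSpace ℝ (Fin n)}
    (hx : x ∈ ball (0 : EuclideanSpace ℝ (Fin n)) (1/2))
    (hy : y ∈ ball (0 : EuclideanSpace ℝ (Fin n)) (1/2))
    (hne : x ≠ y) (hxy : ‖x - y‖ < 1/8) :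
    ‖u x - u y‖ ≤ ((2 ^ (n+1) / lam) *
        (volume (ball (0 : EuclideanSpace ℝ (Fin n)) 1)).toReal ^ (-(1:ℝ)/(n:ℝ)))
      * K * ‖x - y‖ ^ lam := by
  classical
  haveI : Nontrivial (EuclideanSpace ℝ (Fin n)) := by
    apply Module.nontrivial_of_finrank_pos (R := ℝ)
    rw [finrank_euclideanSpace_fin]; omega
  set V := (volume (ball (0 : EuclideanSpace ℝ (Fin n)) 1)).toReal with hV
  have hV0 : 0 < V :=
    ENNReal.toReal_pos (measure_ball_pos volume _ one_pos).ne' measure_ball_lt_top.ne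
  have hn0 : (n:ℝ) ≠ 0 := by positivity
  have hnpos : (0:ℝ) < n := by positivity
  set r := ‖x - y‖ with hr
  have hr0 : 0 < r := by rw [hr]; simpa [sub_eq_zero] using hne
  have hr8 : r < 1/8 := hxy
  set ρ := r/2 with hρ
  have hρ0 : 0 < ρ := by positivity
  set m : EuclideanSpace ℝ (Fin n) := (2:ℝ)⁻¹ • (x + y) with hm
  have hmx : ‖m - x‖ = ρ := by
    have : m - x = (2:ℝ)⁻¹ • (y - x) := by rw [hm]; module
    rw [this, norm_smul, norm_sub_rev]
    simp [hρ, hr]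
    ring
  have hmy : ‖m - y‖ = ρ := by
    have : m - y = (2:ℝ)⁻¹ • (x - y) := by rw [hm]; module
    rw [this, norm_smul]
    simp [hρ, hr]
    ring
  have hx' : ‖x‖ < 1/2 := mem_ball_zero_iff.mp hx
  have hy' : ‖y‖ < 1/2 := mem_ball_zero_iff.mp hy
  -- continuity of the derivative
  have Dc : ContinuousOn (fderiv ℝ u) (ball (0 : EuclideanSpace ℝ (Fin n)) 1) :=
    hu.continuousOn_fderiv_of_isOpen isOpen_ball le_rfl
  set ν := volume.restrict (Ioc (0:ℝ) 1) with hν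
  haveI : IsFiniteMeasure ν := by
    constructor
    rw [hν, Measure.restrict_apply_univ, Real.volume_Ioc]
    exact ENNReal.ofReal_lt_top
  haveI : IsFiniteMeasure (volume.restrict (ball m ρ)) :=
    ⟨by rw [Measure.restrict_apply_univ]; exact measure_ball_lt_top⟩
  -- the main one-point estimate
  have main : ∀ p : EuclideanSpace ℝ (Fin n), p ∈ ball (0 : EuclideanSpace ℝ (Fin n)) (1/2) →
      ‖m - p‖ ≤ ρ →
      ∫ z in ball m ρ, ‖u p - u z‖ ≤ (K * V ^ (1 - 1/(n:ℝ)) / lam) * r ^ (lam + n) := by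
    intro p hp hmp
    have hp' : ‖p‖ < 1/2 := mem_ball_zero_iff.mp hp
    have hzp : ∀ z ∈ ball m ρ, ‖z - p‖ < r := by
      intro z hz
      rw [mem_ball, dist_eq_norm] at hz
      calc ‖z - p‖ = ‖(z - m) + (m - p)‖ := by rw [sub_add_sub_cancel]
        _ ≤ ‖z - m‖ + ‖m - p‖ := norm_add_le _ _
        _ < ρ + ρ := by exact add_lt_add_of_lt_of_le hz hmp
        _ = r := by rw [hρ]; ring
    have hcb1 : closedBall p r ⊆ ball (0 : EuclideanSpace ℝ (Fin n)) 1 := by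
      intro w hw
      rw [mem_closedBall, dist_eq_norm] at hw
      rw [mem_ball_zero_iff]
      calc ‖w‖ = ‖(w - p) + p‖ := by rw [sub_add_cancel]
        _ ≤ ‖w - p‖ + ‖p‖ := norm_add_le _ _
        _ < 1 := by linarith
    have hcb2 : closedBall m ρ ⊆ closedBall p r := by
      apply closedBall_subset_closedBall'
      rw [dist_eq_norm]
      linarith
    -- bound for ‖Du‖ on closedBall p r
    obtain ⟨Mb, hMb⟩ := (isCompact_closedBall p r).exists_bound_of_continuousOn (Dc.mono hcb1)
    set G : EuclideanSpace ℝ (Fin n) × ℝ → ℝ :=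
      fun q => ‖fderiv ℝ u (p + q.2 • (q.1 - p))‖ with hG
    have hGmeas : Measurable G := by
      apply Measurable.norm
      exact (measurable_fderiv ℝ u).comp
        (continuous_const.add (continuous_snd.smul (continuous_fst.sub continuous_const))).measurable
    have hGmem : ∀ q ∈ (ball m ρ) ×ˢ (Ioc (0:ℝ) 1),
        p + q.2 • (q.1 - p) ∈ closedBall p r := by
      rintro ⟨z, t⟩ ⟨hz, ht⟩
      rw [mem_closedBall, dist_eq_norm, add_sub_cancel_left, norm_smul, Real.norm_eq_abs,
        abs_of_pos ht.1]
      calc t * ‖z - p‖ ≤ 1 * r := by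
            apply mul_le_mul ht.2 (hzp z hz).le (norm_nonneg _) zero_le_one
        _ = r := one_mul r
    have hGint : Integrable G ((volume.restrict (ball m ρ)).prod ν) := by
      apply Integrable.mono' (integrable_const (max Mb 0)) hGmeas.aestronglyMeasurable
      rw [hν, Measure.prod_restrict]
      filter_upwards [ae_restrict_mem (measurableSet_ball.prod measurableSet_Ioc)] with q hq
      rw [Real.norm_eq_abs, abs_of_nonneg (norm_nonneg _)]
      exact le_max_of_le_left (hMb _ (hGmem q hq))
    -- Step A : FTC along segments
    have stepA : ∀ z ∈ ball m ρ, ‖u p - u z‖ ≤ r * ∫ t, G (z, t) ∂ν := by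
      intro z hz
      set γ : ℝ → EuclideanSpace ℝ (Fin n) := fun t => p + t • (z - p) with hγ
      have hγmem : ∀ t ∈ uIcc (0:ℝ) 1, γ t ∈ ball (0 : EuclideanSpace ℝ (Fin n)) 1 := by
        intro t ht
        rw [uIcc_of_le zero_le_one, mem_Icc] at ht
        apply hcb1
        rw [mem_closedBall, dist_eq_norm, hγ, add_sub_cancel_left, norm_smul, Real.norm_eq_abs,
          abs_of_nonneg ht.1]
        calc t * ‖z - p‖ ≤ 1 * r :=
              mul_le_mul ht.2 (hzp z hz).le (norm_nonneg _) zero_le_one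
          _ = r := one_mul r
      have hγcont : Continuous γ := by
        apply continuous_const.add (continuous_id.smul continuous_const)
      have hderiv : ∀ t ∈ uIcc (0:ℝ) 1,
          HasDerivAt (fun s => u (γ s)) ((fderiv ℝ u (γ t)) (z - p)) t := by
        intro t ht
        have h1 : HasFDerivAt u (fderiv ℝ u (γ t)) (γ t) :=
          ((hu.differentiableOn one_ne_zero).differentiableAt
            (isOpen_ball.mem_nhds (hγmem t ht))).hasFDerivAt
        have h2 : HasDerivAt γ (z - p) t := by
          have := ((hasDerivAt_id t).smul_const (z - p)).const_add p
          simpa [hγ] using this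
        exact h1.comp_hasDerivAt t h2
      have hDγ : ContinuousOn (fun t => fderiv ℝ u (γ t)) (uIcc (0:ℝ) 1) :=
        Dc.comp hγcont.continuousOn (fun t ht => hγmem t ht)
      have hcont : ContinuousOn (fun t => (fderiv ℝ u (γ t)) (z - p)) (uIcc (0:ℝ) 1) :=
        hDγ.clm_apply continuousOn_const
      have hint' : IntervalIntegrable (fun t => (fderiv ℝ u (γ t)) (z - p)) volume 0 1 :=
        hcont.intervalIntegrable
      have hFTC : ∫ t in (0:ℝ)..1, (fderiv ℝ u (γ t)) (z - p) = u z - u p := by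
        have := intervalIntegral.integral_eq_sub_of_hasDerivAt hderiv hint'
        rw [this]
        congr 1 <;> simp [hγ]
      calc ‖u p - u z‖ = ‖∫ t in (0:ℝ)..1, (fderiv ℝ u (γ t)) (z - p)‖ := by
            rw [hFTC, norm_sub_rev]
        _ ≤ ∫ t in (0:ℝ)..1, ‖(fderiv ℝ u (γ t)) (z - p)‖ :=
            intervalIntegral.norm_integral_le_integral_norm zero_le_one
        _ ≤ ∫ t in (0:ℝ)..1, ‖fderiv ℝ u (γ t)‖ * r := by
            apply intervalIntegral.integral_mono_on zero_le_one hint'.norm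
              ((hDγ.norm.mul continuousOn_const).intervalIntegrable)
            intro t ht
            calc ‖(fderiv ℝ u (γ t)) (z - p)‖ ≤ ‖fderiv ℝ u (γ t)‖ * ‖z - p‖ :=
                  (fderiv ℝ u (γ t)).le_opNorm _
              _ ≤ ‖fderiv ℝ u (γ t)‖ * r :=
                  mul_le_mul_of_nonneg_left (hzp z hz).le (norm_nonneg _)
        _ = (∫ t in (0:ℝ)..1, ‖fderiv ℝ u (γ t)‖) * r := by
            rw [intervalIntegral.integral_mul_const]
        _ = r * ∫ t, G (z, t) ∂ν := by
            rw [intervalIntegral.integral_of_le zero_le_one, mul_comm]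
    -- integrate in z, swap, and estimate in t
    have huc : ContinuousOn u (ball (0 : EuclideanSpace ℝ (Fin n)) 1) := hu.continuousOn
    have hintL : IntegrableOn (fun z => ‖u p - u z‖) (ball m ρ) volume := by
      apply IntegrableOn.mono_set ?_ ball_subset_closedBall
      apply ContinuousOn.integrableOn_compact (isCompact_closedBall m ρ)
      exact (continuousOn_const.sub (huc.mono (fun w hw => hcb1 (hcb2 hw)))).norm
    have hintR : IntegrableOn (fun z => r * ∫ t, G (z, t) ∂ν) (ball m ρ) volume :=
      (hGint.integral_prod_left).const_mul r
    have swap1 : ∫ z in ball m ρ, ‖u p - u z‖ ≤ r * ∫ t, (∫ z in ball m ρ, G (z, t)) ∂ν := by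
      calc ∫ z in ball m ρ, ‖u p - u z‖ ≤ ∫ z in ball m ρ, (r * ∫ t, G (z, t) ∂ν) :=
            setIntegral_mono_on hintL hintR measurableSet_ball stepA
        _ = r * ∫ z in ball m ρ, (∫ t, G (z, t) ∂ν) := integral_const_mul r _
        _ = r * ∫ t, (∫ z in ball m ρ, G (z, t)) ∂ν := by
            rw [integral_integral_swap (f := fun z t => G (z, t)) hGint]
    -- pointwise-in-t bound
    have hIoc : ∀ t ∈ Ioc (0:ℝ) 1, (∫ z in ball m ρ, G (z, t)) ≤
        (K * V ^ (1 - 1/(n:ℝ)) * r ^ (lam + (n:ℝ) - 1)) * t ^ (lam - 1) := by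
      intro t ht
      obtain ⟨ht0, ht1⟩ := ht
      have htr0 : 0 < t * r := by positivity
      have htr4 : t * r < 1/4 := by nlinarith
      have htrr : t * r ≤ r := by nlinarith
      have hIu : IntegrableOn (fun w => ‖fderiv ℝ u w‖) (ball p (t * r)) volume :=
        (((Dc.mono hcb1).norm).integrableOn_compact (isCompact_closedBall p r)).mono_set
          ((ball_subset_closedBall).trans (closedBall_subset_closedBall htrr))
      have e1 : ∀ z : EuclideanSpace ℝ (Fin n), p + t • (z - p) = (p - t • p) + t • z := by
        intro z; rw [smul_sub]; abel
      have e2 : ∫ z in ball m ρ, G (z, t) =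
          ((t ^ n : ℝ))⁻¹ • ∫ w in t • ball m ρ, ‖fderiv ℝ u ((p - t • p) + w)‖ := by
        simp only [hG, e1]
        have h := Measure.setIntegral_comp_smul_of_pos volume
          (fun w => ‖fderiv ℝ u ((p - t • p) + w)‖) (ball m ρ) ht0
        rw [finrank_euclideanSpace_fin] at h
        exact h
      have e3 : t • ball m ρ = ball (t • m) (t * ρ) := by
        rw [_root_.smul_ball ht0.ne', Real.norm_eq_abs, abs_of_pos ht0]
      have e4 : ∫ w in ball (t • m) (t * ρ), ‖fderiv ℝ u ((p - t • p) + w)‖ =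
          ∫ w in ball ((p - t • p) + t • m) (t * ρ), ‖fderiv ℝ u w‖ := by
        have hmp' := (measurePreserving_add_left volume (p - t • p)).setIntegral_preimage_emb
          (MeasurableEquiv.addLeft (p - t • p)).measurableEmbedding
          (fun w => ‖fderiv ℝ u w‖) (ball ((p - t • p) + t • m) (t * ρ))
        rw [← hmp']
        congr 1
        ext w
        simp [mem_ball, dist_eq_norm]
      have e5 : ball ((p - t • p) + t • m) (t * ρ) ⊆ ball p (t * r) := by
        apply ball_subset_ball'
        have : (p - t • p) + t • m - p = t • (m - p) := by rw [smul_sub]; abel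
        rw [dist_eq_norm, this, norm_smul, Real.norm_eq_abs, abs_of_pos ht0]
        have : t * ‖m - p‖ ≤ t * ρ := mul_le_mul_of_nonneg_left hmp ht0.le
        rw [hρ] at this ⊢
        linarith
      have e6 : ∫ w in ball ((p - t • p) + t • m) (t * ρ), ‖fderiv ℝ u w‖ ≤
          ∫ w in ball p (t * r), ‖fderiv ℝ u w‖ :=
        setIntegral_mono_set hIu
          (Filter.Eventually.of_forall (fun w => norm_nonneg _))
          (HasSubset.Subset.eventuallyLE e5)
      have e7 : ∫ w in ball p (t * r), ‖fderiv ℝ u w‖ ≤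
          V ^ (1 - 1/(n:ℝ)) * (t * r) ^ ((n:ℝ) - 1) * (K * (t * r) ^ lam) := by
        apply l1_ball_bound n d hn hu hK hlam0 hM ?_ htr0 htr4 ?_
        · rw [mem_ball_zero_iff]; linarith
        · exact (closedBall_subset_closedBall htrr).trans hcb1
      have e8 : ((t ^ n : ℝ))⁻¹ * (V ^ (1 - 1/(n:ℝ)) * (t * r) ^ ((n:ℝ) - 1) * (K * (t * r) ^ lam))
          = (K * V ^ (1 - 1/(n:ℝ)) * r ^ (lam + (n:ℝ) - 1)) * t ^ (lam - 1) := by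
        rw [← Real.rpow_natCast t n, ← Real.rpow_neg ht0.le,
          Real.mul_rpow ht0.le hr0.le, Real.mul_rpow ht0.le hr0.le,
          show lam + (n:ℝ) - 1 = ((n:ℝ) - 1) + lam by ring, Real.rpow_add hr0,
          show lam - 1 = -(n:ℝ) + (((n:ℝ) - 1) + lam) by ring, Real.rpow_add ht0,
          Real.rpow_add ht0]
        ring
      calc ∫ z in ball m ρ, G (z, t)
          = ((t ^ n : ℝ))⁻¹ * ∫ w in ball ((p - t • p) + t • m) (t * ρ), ‖fderiv ℝ u w‖ := by
            rw [e2, e3, e4, smul_eq_mul]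
        _ ≤ ((t ^ n : ℝ))⁻¹ * (V ^ (1 - 1/(n:ℝ)) * (t * r) ^ ((n:ℝ) - 1) * (K * (t * r) ^ lam)) := by
            apply mul_le_mul_of_nonneg_left (e6.trans e7) (by positivity)
        _ = (K * V ^ (1 - 1/(n:ℝ)) * r ^ (lam + (n:ℝ) - 1)) * t ^ (lam - 1) := e8
    -- integrate the majorant in t
    have hi1 : Integrable (fun t => ∫ z in ball m ρ, G (z, t)) ν := hGint.integral_prod_right
    have hi2 : IntegrableOn
        (fun t : ℝ => (K * V ^ (1 - 1/(n:ℝ)) * r ^ (lam + (n:ℝ) - 1)) * t ^ (lam - 1))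
        (Ioc (0:ℝ) 1) volume := by
      apply Integrable.const_mul
      exact (intervalIntegrable_iff_integrableOn_Ioc_of_le zero_le_one).mp
        (by
        open intervalIntegral in
        exact intervalIntegrable_rpow' (by linarith))
    have hrpint : ∫ t in Ioc (0:ℝ) 1, t ^ (lam - 1) = 1/lam := by
      open intervalIntegral in
      rw [← intervalIntegral.integral_of_le zero_le_one,
        integral_rpow (Or.inl (by linarith : (-1:ℝ) < lam - 1))]
      have hl : lam - 1 + 1 = lam := by ring
      rw [hl, Real.one_rpow, Real.zero_rpow hlam0.ne']
      ring
    have swap2 : ∫ t, (∫ z in ball m ρ, G (z, t)) ∂ν ≤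
        (K * V ^ (1 - 1/(n:ℝ)) * r ^ (lam + (n:ℝ) - 1)) * (1/lam) := by
      calc ∫ t, (∫ z in ball m ρ, G (z, t)) ∂ν
          ≤ ∫ t in Ioc (0:ℝ) 1, (K * V ^ (1 - 1/(n:ℝ)) * r ^ (lam + (n:ℝ) - 1)) * t ^ (lam - 1) :=
            setIntegral_mono_on hi1 hi2 measurableSet_Ioc hIoc
        _ = (K * V ^ (1 - 1/(n:ℝ)) * r ^ (lam + (n:ℝ) - 1)) * ∫ t in Ioc (0:ℝ) 1, t ^ (lam - 1) :=
            integral_const_mul _ _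
        _ = (K * V ^ (1 - 1/(n:ℝ)) * r ^ (lam + (n:ℝ) - 1)) * (1/lam) := by rw [hrpint]
    calc ∫ z in ball m ρ, ‖u p - u z‖
        ≤ r * ∫ t, (∫ z in ball m ρ, G (z, t)) ∂ν := swap1
      _ ≤ r * ((K * V ^ (1 - 1/(n:ℝ)) * r ^ (lam + (n:ℝ) - 1)) * (1/lam)) :=
          mul_le_mul_of_nonneg_left swap2 hr0.le
      _ = (K * V ^ (1 - 1/(n:ℝ)) / lam) * r ^ (lam + n) := by
          rw [show lam + (n:ℝ) = 1 + (lam + (n:ℝ) - 1) by ring, Real.rpow_add hr0,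
            Real.rpow_one]
          ring
  -- combine the two bounds
  have hBx := main x hx (le_of_eq hmx)
  have hBy := main y hy (le_of_eq hmy)
  have hvol : (volume (ball m ρ)).toReal = ρ ^ n * V := by
    rw [Measure.addHaar_ball volume m hρ0.le, finrank_euclideanSpace_fin, ENNReal.toReal_mul,
      ENNReal.toReal_ofReal (by positivity)]
  have hvolpos : 0 < (volume (ball m ρ)).toReal := by rw [hvol]; positivity
  have hcbm : closedBall m ρ ⊆ ball (0 : EuclideanSpace ℝ (Fin n)) 1 := by
    intro w hw
    rw [mem_closedBall, dist_eq_norm] at hw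
    rw [mem_ball_zero_iff]
    have hw2 : w = (w - m) + (m - x) + x := by abel
    calc ‖w‖ = ‖(w - m) + (m - x) + x‖ := by rw [← hw2]
      _ ≤ ‖(w - m) + (m - x)‖ + ‖x‖ := norm_add_le _ _
      _ ≤ ‖w - m‖ + ‖m - x‖ + ‖x‖ := add_le_add (norm_add_le _ _) le_rfl
      _ < 1 := by rw [hmx]; rw [hρ] at hw ⊢; linarith
  have hIx : IntegrableOn (fun z => ‖u x - u z‖) (ball m ρ) volume :=
    ((continuousOn_const.sub (hu.continuousOn.mono hcbm)).norm.integrableOn_compact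
      (isCompact_closedBall m ρ)).mono_set ball_subset_closedBall
  have hIy : IntegrableOn (fun z => ‖u y - u z‖) (ball m ρ) volume :=
    ((continuousOn_const.sub (hu.continuousOn.mono hcbm)).norm.integrableOn_compact
      (isCompact_closedBall m ρ)).mono_set ball_subset_closedBall
  have hptw : ∀ z ∈ ball m ρ, ‖u x - u y‖ ≤ ‖u x - u z‖ + ‖u y - u z‖ := by
    intro z _
    have hd : u x - u y = (u x - u z) - (u y - u z) := by abel
    rw [hd]
    exact norm_sub_le _ _
  have tot : (volume (ball m ρ)).toReal * ‖u x - u y‖ ≤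
      2 * ((K * V ^ (1 - 1/(n:ℝ)) / lam) * r ^ (lam + n)) := by
    have h1 : ∫ z in ball m ρ, ‖u x - u y‖ = (volume (ball m ρ)).toReal * ‖u x - u y‖ := by
      rw [setIntegral_const, smul_eq_mul, measureReal_def]
    rw [← h1]
    calc ∫ z in ball m ρ, ‖u x - u y‖
        ≤ ∫ z in ball m ρ, (‖u x - u z‖ + ‖u y - u z‖) :=
          setIntegral_mono_on (integrableOn_const measure_ball_lt_top.ne)
            (hIx.add hIy) measurableSet_ball hptw
      _ = (∫ z in ball m ρ, ‖u x - u z‖) + ∫ z in ball m ρ, ‖u y - u z‖ :=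
          integral_add hIx hIy
      _ ≤ (K * V ^ (1 - 1/(n:ℝ)) / lam) * r ^ (lam + n)
            + (K * V ^ (1 - 1/(n:ℝ)) / lam) * r ^ (lam + n) := add_le_add hBx hBy
      _ = 2 * ((K * V ^ (1 - 1/(n:ℝ)) / lam) * r ^ (lam + n)) := by ring
  have final : ‖u x - u y‖ ≤
      2 * ((K * V ^ (1 - 1/(n:ℝ)) / lam) * r ^ (lam + n)) / (ρ ^ n * V) := by
    rw [← hvol, le_div_iff₀ hvolpos, mul_comm]
    exact tot
  refine final.trans (le_of_eq ?_)
  rw [Real.rpow_add hr0, Real.rpow_natCast, hρ, div_pow,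
    show (1 - 1/(n:ℝ)) = 1 + (-(1:ℝ)/(n:ℝ)) by ring, Real.rpow_add hV0, Real.rpow_one]
  have hrn : r ^ n ≠ 0 := pow_ne_zero _ hr0.ne'
  have h2n : ((2:ℝ)) ^ n ≠ 0 := by positivity
  field_simp
  ring

open MeasureTheory Metric

/-- Morrey's Dirichlet growth theorem in the borderline exponent `p = n`:
if `u ∈ C¹(B₁, ℝ^d)` satisfies `∫_{B_r(x)} ‖Du‖^n ≤ K^n r^{nλ}` for all `x ∈ B_{3/4}` and
`0 < r < 1/4`, then `‖u(x) − u(y)‖ ≤ C K ‖x−y‖^λ` on `B_{1/2}`, where `C = C(n,d,λ)`. -/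
theorem morrey_dirichlet_growth (n d : ℕ) (hn : 1 ≤ n) (hd : 1 ≤ d)
    (lam : ℝ) (hlam0 : 0 < lam) (hlam1 : lam ≤ 1) :
    ∃ C : ℝ, 0 < C ∧ ∀ K : ℝ, 0 ≤ K →
      ∀ u : EuclideanSpace ℝ (Fin n) → EuclideanSpace ℝ (Fin d),
      ContDiffOn ℝ 1 u (ball (0 : EuclideanSpace ℝ (Fin n)) 1) →
      (∀ x ∈ ball (0 : EuclideanSpace ℝ (Fin n)) (3/4), ∀ r : ℝ, 0 < r → r < 1/4 →
        (∫ y in ball x r, ‖fderiv ℝ u y‖ ^ n) ≤ K ^ n * r ^ ((n : ℝ) * lam)) →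
      ∀ x ∈ ball (0 : EuclideanSpace ℝ (Fin n)) (1/2),
      ∀ y ∈ ball (0 : EuclideanSpace ℝ (Fin n)) (1/2),
        ‖u x - u y‖ ≤ C * K * ‖x - y‖ ^ lam := by
  set V := (volume (ball (0 : EuclideanSpace ℝ (Fin n)) 1)).toReal with hV
  have hV0 : 0 < V :=
    ENNReal.toReal_pos (measure_ball_pos volume _ one_pos).ne' measure_ball_lt_top.ne
  set C2 := (2 ^ (n+1) / lam) * V ^ (-(1:ℝ)/(n:ℝ)) with hC2
  have hC20 : 0 < C2 := by positivity
  refine ⟨8 * C2, by positivity, ?_⟩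
  intro K hK u hu hM x hx y hy
  by_cases hxy : x = y
  · simp [hxy, Real.zero_rpow hlam0.ne']
  have step : ∀ a b : EuclideanSpace ℝ (Fin n), a ∈ ball 0 (1/2) → b ∈ ball 0 (1/2) →
      ‖a - b‖ < 1/8 → ‖u a - u b‖ ≤ C2 * K * ‖a - b‖ ^ lam := by
    intro a b ha hb hab
    by_cases hne : a = b
    · simp [hne, Real.zero_rpow hlam0.ne']
    · exact key_pair n d hn hlam0 hlam1 hK hu hM ha hb hne hab
  set r := ‖x - y‖ with hr
  have hr0 : 0 < r := by
    rw [hr, norm_pos_iff, sub_ne_zero]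
    exact hxy
  have hx' : ‖x‖ < 1/2 := mem_ball_zero_iff.mp hx
  have hy' : ‖y‖ < 1/2 := mem_ball_zero_iff.mp hy
  have hr1 : r < 1 := by
    calc r ≤ ‖x‖ + ‖y‖ := norm_sub_le _ _
      _ < 1 := by linarith
  set w : ℕ → EuclideanSpace ℝ (Fin n) := fun i => x + ((i : ℝ)/8) • (y - x) with hw
  have hw0 : w 0 = x := by simp [hw]
  have hw8 : w 8 = y := by
    rw [hw]
    simp only []
    rw [show ((8:ℕ):ℝ)/8 = 1 by norm_num, one_smul]
    abel
  have hwmem : ∀ i, i ≤ 8 → w i ∈ ball (0 : EuclideanSpace ℝ (Fin n)) (1/2) := by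
    intro i hi
    have h0 : (0:ℝ) ≤ (i:ℝ)/8 := by positivity
    have h1 : (i:ℝ)/8 ≤ 1 := by
      have : (i:ℝ) ≤ 8 := by exact_mod_cast hi
      linarith
    have hwi : w i = (1 - (i:ℝ)/8) • x + ((i:ℝ)/8) • y := by rw [hw]; module
    rw [hwi]
    exact convex_ball (0 : EuclideanSpace ℝ (Fin n)) (1/2) hx hy (by linarith) h0 (by ring)
  have hstep : ∀ i : ℕ, ‖w i - w (i+1)‖ = r / 8 := by
    intro i
    have hdiff : w i - w (i+1) = ((-1:ℝ)/8) • (y - x) := by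
      rw [hw]; push_cast; module
    have habs : |(-1:ℝ)/8| = 1/8 := by rw [abs_div, abs_neg, abs_one]; norm_num
    rw [hdiff, norm_smul, Real.norm_eq_abs, norm_sub_rev, ← hr, habs]
    ring
  have hbd : ∀ i : ℕ, i < 8 → ‖u (w i) - u (w (i+1))‖ ≤ C2 * K * (r/8) ^ lam := by
    intro i hi
    have h := step (w i) (w (i+1)) (hwmem i (by omega)) (hwmem (i+1) (by omega))
      (by rw [hstep]; linarith)
    rwa [hstep i] at h
  have hone : (r/8) ^ lam ≤ r ^ lam :=
    Real.rpow_le_rpow (by positivity) (by linarith) hlam0.le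
  have tri : ∀ N : ℕ, ‖u (w 0) - u (w N)‖ ≤ ∑ i ∈ Finset.range N, ‖u (w i) - u (w (i+1))‖ := by
    intro N
    induction N with
    | zero => simp
    | succ N ih =>
      calc ‖u (w 0) - u (w (N+1))‖
          ≤ ‖u (w 0) - u (w N)‖ + ‖u (w N) - u (w (N+1))‖ := by
            have hsplit : u (w 0) - u (w (N+1)) =
                (u (w 0) - u (w N)) + (u (w N) - u (w (N+1))) := by abel
            rw [hsplit]
            exact norm_add_le _ _
        _ ≤ (∑ i ∈ Finset.range N, ‖u (w i) - u (w (i+1))‖) + ‖u (w N) - u (w (N+1))‖ :=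
            add_le_add ih le_rfl
        _ = ∑ i ∈ Finset.range (N+1), ‖u (w i) - u (w (i+1))‖ :=
            (Finset.sum_range_succ _ N).symm
  calc ‖u x - u y‖ = ‖u (w 0) - u (w 8)‖ := by rw [hw0, hw8]
    _ ≤ ∑ i ∈ Finset.range 8, ‖u (w i) - u (w (i+1))‖ := tri 8
    _ ≤ ∑ _i ∈ Finset.range 8, (C2 * K * (r/8) ^ lam) := by
        apply Finset.sum_le_sum
        intro i hi
        exact hbd i (Finset.mem_range.1 hi)
    _ = 8 * (C2 * K * (r/8) ^ lam) := by
        rw [Finset.sum_const, Finset.card_range, nsmul_eq_mul]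
        norm_num
    _ = 8 * C2 * K * (r/8) ^ lam := by ring
    _ ≤ 8 * C2 * K * r ^ lam := by gcongr
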